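/- Let (Ω, μ) be a measure space and n ≥ 1. There exists a constant C > 0 such that for all f, g ∈ L^{4/3}(Ω, μ; ℝⁿ), ( ‖f‖_{L^{4/3}}^{2/3} + ‖g‖_{L^{4/3}}^{2/3} ) · ∫_Ω (Φ(f) − Φ(g)) · (f − g) dμ ≥ C ‖f − g‖_{L^{4/3}}². -/

import Mathlib

open MeasureTheory
open scoped InnerProductSpace ENNReal

/-- The duality map `Φ(x) = ‖x‖^{-2/3} x`, with `Φ(0) = 0`. -/
noncomputable def Phi {n : ℕ} (x : EuclideanSpace ℝ (Fin n)) : EuclideanSpace ℝ (Fin n) :=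
  (‖x‖ ^ (-(2 : ℝ) / 3)) • x

section PhiAuxiliary

lemma rpow43 (a : ℝ) (ha : 0 ≤ a) : a ^ ((4:ℝ)/3) = (a ^ ((1:ℝ)/3)) ^ (4:ℕ) := by
  rw [← Real.rpow_natCast (a ^ ((1:ℝ)/3)) 4, ← Real.rpow_mul ha]; norm_num

lemma rpow23 (a : ℝ) (ha : 0 ≤ a) : a ^ ((2:ℝ)/3) = (a ^ ((1:ℝ)/3)) ^ (2:ℕ) := by
  rw [← Real.rpow_natCast (a ^ ((1:ℝ)/3)) 2, ← Real.rpow_mul ha]; norm_num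

lemma cube_rpow (a : ℝ) (ha : 0 ≤ a) : (a ^ ((1:ℝ)/3)) ^ (3:ℕ) = a := by
  rw [← Real.rpow_natCast (a ^ ((1:ℝ)/3)) 3, ← Real.rpow_mul ha]; norm_num

lemma rpow_neg23 (a : ℝ) (ha : 0 < a) : a ^ (-(2:ℝ)/3) = ((a ^ ((1:ℝ)/3)) ^ (2:ℕ))⁻¹ := by
  rw [← rpow23 a ha.le, ← Real.rpow_neg ha.le]; norm_num

/-- Key scalar inequality, assuming `b ≤ a`. -/
lemma key_scalar (a b t : ℝ) (ha : 0 ≤ a) (hb : 0 ≤ b) (hba : b ≤ a) (ht : |t| ≤ a * b) :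
    (1/3) * (a^2 - 2*t + b^2) ≤
      (a + b) ^ ((2:ℝ)/3) *
        ((a ^ ((4:ℝ)/3) + b ^ ((4:ℝ)/3)) - (a ^ (-(2:ℝ)/3) + b ^ (-(2:ℝ)/3)) * t) := by
  rcases eq_or_lt_of_le ha with h0 | hapos
  · -- a = 0, so b = 0, t = 0
    have hb0 : b = 0 := le_antisymm (hba.trans h0.symm.le) hb
    have ht0 : t = 0 := by
      have := ht
      rw [← h0, hb0] at this
      simpa [abs_nonpos_iff] using this
    rw [← h0, hb0, ht0]
    norm_num [Real.zero_rpow]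
  rcases eq_or_lt_of_le hb with hb0 | hbpos
  · -- b = 0, t = 0
    have ht0 : t = 0 := by
      have := ht
      rw [← hb0] at this
      simpa [abs_nonpos_iff] using this
    rw [← hb0, ht0]
    have h1 : (a + 0) ^ ((2:ℝ)/3) * ((a ^ ((4:ℝ)/3) + (0:ℝ) ^ ((4:ℝ)/3)) - (a ^ (-(2:ℝ)/3) + (0:ℝ) ^ (-(2:ℝ)/3)) * 0) = a ^ ((2:ℝ)/3) * a ^ ((4:ℝ)/3) := by
      norm_num [Real.zero_rpow]
    rw [h1, ← Real.rpow_add hapos]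
    norm_num
    nlinarith [Real.rpow_natCast a 2, sq_nonneg a, Real.rpow_two a]
  · -- main case: a > 0, b > 0
    set s := a ^ ((1:ℝ)/3) with hs
    set r := b ^ ((1:ℝ)/3) with hr
    have hspos : 0 < s := Real.rpow_pos_of_pos hapos _
    have hrpos : 0 < r := Real.rpow_pos_of_pos hbpos _
    have hsr : r ≤ s := Real.rpow_le_rpow hb hba (by norm_num)
    have ha3 : a = s ^ (3:ℕ) := (cube_rpow a ha).symm
    have hb3 : b = r ^ (3:ℕ) := (cube_rpow b hb).symm
    have hP : s ^ (2:ℕ) ≤ (a + b) ^ ((2:ℝ)/3) := by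
      rw [← rpow23 a ha]
      exact Real.rpow_le_rpow ha (by linarith) (by norm_num)
    set P := (a + b) ^ ((2:ℝ)/3) with hPdef
    rw [rpow43 a ha, rpow43 b hb, rpow_neg23 a hapos, rpow_neg23 b hbpos, ← hs, ← hr]
    have hts : t ≤ s^3 * r^3 := by
      calc t ≤ |t| := le_abs_self t
      _ ≤ a * b := ht
      _ = s^3 * r^3 := by rw [ha3, hb3]
    have hmul : 0 < s^2 * r^2 := by positivity
    rw [ha3, hb3]
    rw [← mul_le_mul_iff_of_pos_right hmul]
    have expand : P * ((s ^ (4:ℕ) + r ^ (4:ℕ)) - ((s ^ (2:ℕ))⁻¹ + (r ^ (2:ℕ))⁻¹) * t) * (s^2 * r^2)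
        = P * (s^4 + r^4) * (s^2 * r^2) - P * (s^2 + r^2) * t := by
      field_simp
      ring
    rw [expand]
    have h1 : 0 ≤ s^2 * r^2 * (s - r)^2 * (s^2 + s*r + r^2) * (3*P - (s^2 + s*r + r^2)) := by
      have : 3 * P - (s^2 + s*r + r^2) ≥ 0 := by nlinarith
      positivity
    have h2 : 0 ≤ (s^3 * r^3 - t) * (P * (s^2 + r^2) - (2/3) * (s^2 * r^2)) := by
      have hfac : 0 ≤ P * (s^2 + r^2) - (2/3) * (s^2 * r^2) := by nlinarith
      exact mul_nonneg (by linarith) hfac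
    nlinarith [h1, h2]

lemma neg23_mul_sq (c : ℝ) (hc : 0 ≤ c) : c ^ (-(2:ℝ)/3) * c ^ (2:ℕ) = c ^ ((4:ℝ)/3) := by
  rcases eq_or_lt_of_le hc with h | h
  · rw [← h]; norm_num [Real.zero_rpow]
  · rw [← Real.rpow_natCast c 2, ← Real.rpow_add h]; norm_num

lemma neg23_mul_self (c : ℝ) (hc : 0 ≤ c) : c ^ (-(2:ℝ)/3) * c = c ^ ((1:ℝ)/3) := by
  rcases eq_or_lt_of_le hc with h | h
  · rw [← h]; norm_num [Real.zero_rpow]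
  · nth_rewrite 2 [← Real.rpow_one c]
    rw [← Real.rpow_add h]; norm_num

lemma norm_Phi {n : ℕ} (x : EuclideanSpace ℝ (Fin n)) : ‖Phi x‖ = ‖x‖ ^ ((1:ℝ)/3) := by
  rw [Phi, norm_smul, Real.norm_eq_abs, abs_of_nonneg (Real.rpow_nonneg (norm_nonneg x) _),
    neg23_mul_self _ (norm_nonneg x)]

lemma inner_Phi_sub {n : ℕ} (x y : EuclideanSpace ℝ (Fin n)) :
    ⟪Phi x - Phi y, x - y⟫_ℝ =
      (‖x‖ ^ ((4:ℝ)/3) + ‖y‖ ^ ((4:ℝ)/3)) -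
        (‖x‖ ^ (-(2:ℝ)/3) + ‖y‖ ^ (-(2:ℝ)/3)) * ⟪x, y⟫_ℝ := by
  simp only [Phi, inner_sub_left, inner_sub_right, real_inner_smul_left]
  rw [real_inner_self_eq_norm_sq, real_inner_self_eq_norm_sq, real_inner_comm y x]
  rw [← neg23_mul_sq ‖x‖ (norm_nonneg x), ← neg23_mul_sq ‖y‖ (norm_nonneg y)]
  push_cast
  ring
lemma onethird_mul_self (c : ℝ) (hc : 0 ≤ c) : c ^ ((1:ℝ)/3) * c = c ^ ((4:ℝ)/3) := by
  rcases eq_or_lt_of_le hc with h | h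
  · rw [← h]
    norm_num [Real.zero_rpow]
  · nth_rewrite 2 [← Real.rpow_one c]
    rw [← Real.rpow_add h]
    norm_num


lemma key_point_aux {n : ℕ} (x y : EuclideanSpace ℝ (Fin n)) (hba : ‖y‖ ≤ ‖x‖) :
    (1/3) * ‖x - y‖^2 ≤ (‖x‖ + ‖y‖) ^ ((2:ℝ)/3) * ⟪Phi x - Phi y, x - y⟫_ℝ := by
  rw [inner_Phi_sub, norm_sub_sq_real]
  exact key_scalar ‖x‖ ‖y‖ ⟪x, y⟫_ℝ (norm_nonneg x) (norm_nonneg y) hba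
    (abs_real_inner_le_norm x y)

lemma key_point {n : ℕ} (x y : EuclideanSpace ℝ (Fin n)) :
    (1/3) * ‖x - y‖^2 ≤ (‖x‖ + ‖y‖) ^ ((2:ℝ)/3) * ⟪Phi x - Phi y, x - y⟫_ℝ := by
  rcases le_total ‖y‖ ‖x‖ with h | h
  · exact key_point_aux x y h
  · have := key_point_aux y x h
    have hsymm : ⟪Phi y - Phi x, y - x⟫_ℝ = ⟪Phi x - Phi y, x - y⟫_ℝ := by
      rw [← neg_sub (Phi x) (Phi y), ← neg_sub x y, inner_neg_neg]
    rw [hsymm, norm_sub_rev, add_comm ‖y‖ ‖x‖] at this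
    exact this

lemma inner_Phi_nonneg {n : ℕ} (x y : EuclideanSpace ℝ (Fin n)) :
    0 ≤ ⟪Phi x - Phi y, x - y⟫_ℝ := by
  rcases eq_or_lt_of_le (add_nonneg (norm_nonneg x) (norm_nonneg y)) with h | h
  · have hx : x = 0 := by
      have : ‖x‖ = 0 := by
        have := norm_nonneg x; have := norm_nonneg y; linarith
      simpa using this
    have hy : y = 0 := by
      have : ‖y‖ = 0 := by
        have := norm_nonneg x; have := norm_nonneg y; linarith
      simpa using this
    simp [hx, hy]
  · have hP : 0 < (‖x‖ + ‖y‖) ^ ((2:ℝ)/3) := Real.rpow_pos_of_pos h _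
    nlinarith [key_point x y, sq_nonneg ‖x - y‖]


lemma inner_Phi_le {n : ℕ} (x y : EuclideanSpace ℝ (Fin n)) :
    ⟪Phi x - Phi y, x - y⟫_ℝ ≤ 2 * (‖x‖ + ‖y‖) ^ ((4:ℝ)/3) := by
  have hS : (0:ℝ) ≤ ‖x‖ + ‖y‖ := add_nonneg (norm_nonneg x) (norm_nonneg y)
  have h1 : ⟪Phi x - Phi y, x - y⟫_ℝ ≤ ‖Phi x - Phi y‖ * ‖x - y‖ := real_inner_le_norm _ _
  have h2 : ‖Phi x - Phi y‖ ≤ ‖x‖ ^ ((1:ℝ)/3) + ‖y‖ ^ ((1:ℝ)/3) := by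
    calc ‖Phi x - Phi y‖ ≤ ‖Phi x‖ + ‖Phi y‖ := norm_sub_le _ _
    _ = ‖x‖ ^ ((1:ℝ)/3) + ‖y‖ ^ ((1:ℝ)/3) := by rw [norm_Phi, norm_Phi]
  have h3 : ‖x‖ ^ ((1:ℝ)/3) + ‖y‖ ^ ((1:ℝ)/3) ≤ 2 * (‖x‖ + ‖y‖) ^ ((1:ℝ)/3) := by
    have hx : ‖x‖ ^ ((1:ℝ)/3) ≤ (‖x‖ + ‖y‖) ^ ((1:ℝ)/3) :=
      Real.rpow_le_rpow (norm_nonneg x) (by linarith [norm_nonneg y]) (by norm_num)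
    have hy : ‖y‖ ^ ((1:ℝ)/3) ≤ (‖x‖ + ‖y‖) ^ ((1:ℝ)/3) :=
      Real.rpow_le_rpow (norm_nonneg y) (by linarith [norm_nonneg x]) (by norm_num)
    linarith
  have h4 : ‖x - y‖ ≤ ‖x‖ + ‖y‖ := norm_sub_le x y
  calc ⟪Phi x - Phi y, x - y⟫_ℝ ≤ ‖Phi x - Phi y‖ * ‖x - y‖ := h1
  _ ≤ (2 * (‖x‖ + ‖y‖) ^ ((1:ℝ)/3)) * (‖x‖ + ‖y‖) := by
      apply mul_le_mul (h2.trans h3) h4 (norm_nonneg _)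
      positivity
  _ = 2 * (‖x‖ + ‖y‖) ^ ((4:ℝ)/3) := by
      rw [mul_assoc, onethird_mul_self _ hS]

lemma norm_sub_le_point {n : ℕ} (x y : EuclideanSpace ℝ (Fin n)) :
    ‖x - y‖ ^ ((4:ℝ)/3) ≤
      3 ^ ((2:ℝ)/3) * (⟪Phi x - Phi y, x - y⟫_ℝ) ^ ((2:ℝ)/3) *
        (‖x‖ + ‖y‖) ^ ((4:ℝ)/9) := by
  have hS : (0:ℝ) ≤ ‖x‖ + ‖y‖ := add_nonneg (norm_nonneg x) (norm_nonneg y)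
  have hD := inner_Phi_nonneg x y
  have h2 : ‖x - y‖^2 ≤ 3 * ((‖x‖ + ‖y‖) ^ ((2:ℝ)/3) * ⟪Phi x - Phi y, x - y⟫_ℝ) := by
    linarith [key_point x y]
  have h3 : (‖x - y‖^2) ^ ((2:ℝ)/3) ≤
      (3 * ((‖x‖ + ‖y‖) ^ ((2:ℝ)/3) * ⟪Phi x - Phi y, x - y⟫_ℝ)) ^ ((2:ℝ)/3) :=
    Real.rpow_le_rpow (by positivity) h2 (by norm_num)
  have hL : (‖x - y‖^2) ^ ((2:ℝ)/3) = ‖x - y‖ ^ ((4:ℝ)/3) := by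
    rw [← Real.rpow_natCast ‖x - y‖ 2, ← Real.rpow_mul (norm_nonneg _)]
    norm_num
  have hR : (3 * ((‖x‖ + ‖y‖) ^ ((2:ℝ)/3) * ⟪Phi x - Phi y, x - y⟫_ℝ)) ^ ((2:ℝ)/3)
      = 3 ^ ((2:ℝ)/3) * (⟪Phi x - Phi y, x - y⟫_ℝ) ^ ((2:ℝ)/3) * (‖x‖ + ‖y‖) ^ ((4:ℝ)/9) := by
    rw [Real.mul_rpow (by norm_num) (by positivity),
      Real.mul_rpow (by positivity) hD, ← Real.rpow_mul hS]
    norm_num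
    ring
  rw [hL, hR] at h3
  exact h3

end PhiAuxiliary

lemma ennreal_add_rpow43 (c d : ℝ≥0∞) :
    (c + d) ^ ((4:ℝ)/3) ≤ 2 ^ ((4:ℝ)/3) * (c ^ ((4:ℝ)/3) + d ^ ((4:ℝ)/3)) := by
  have key : ∀ a b : ℝ≥0∞, a ≤ b →
      (a + b) ^ ((4:ℝ)/3) ≤ 2 ^ ((4:ℝ)/3) * (a ^ ((4:ℝ)/3) + b ^ ((4:ℝ)/3)) := by
    intro a b hab
    calc (a + b) ^ ((4:ℝ)/3) ≤ (2 * b) ^ ((4:ℝ)/3) := by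
          apply ENNReal.rpow_le_rpow _ (by norm_num)
          rw [two_mul]; exact add_le_add hab le_rfl
    _ = 2 ^ ((4:ℝ)/3) * b ^ ((4:ℝ)/3) := ENNReal.mul_rpow_of_nonneg _ _ (by norm_num)
    _ ≤ 2 ^ ((4:ℝ)/3) * (a ^ ((4:ℝ)/3) + b ^ ((4:ℝ)/3)) := by
          exact mul_le_mul_right le_add_self _
  rcases le_total c d with h | h
  · exact key c d h
  · have := key d c h
    rwa [add_comm d c, add_comm (d ^ ((4:ℝ)/3))] at this

/-- There is `C > 0` such that for all `f, g ∈ L^{4/3}`,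
`(‖f‖_{4/3}^{2/3} + ‖g‖_{4/3}^{2/3}) ∫ (Φ(f)-Φ(g))·(f-g) ≥ C ‖f-g‖_{4/3}²`. -/
theorem duality_map_Lp_strong_monotonicity
    {Ω : Type*} [MeasurableSpace Ω] (μ : Measure Ω) (n : ℕ) (hn : 1 ≤ n) :
    ∃ C : ℝ, 0 < C ∧ ∀ f g : Ω → EuclideanSpace ℝ (Fin n),
      MemLp f (4 / 3) μ → MemLp g (4 / 3) μ →
      C * (eLpNorm (f - g) (4 / 3) μ).toReal ^ 2 ≤
        ((eLpNorm f (4 / 3) μ).toReal ^ ((2 : ℝ) / 3) +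
          (eLpNorm g (4 / 3) μ).toReal ^ ((2 : ℝ) / 3)) *
          ∫ x, ⟪Phi (f x) - Phi (g x), f x - g x⟫_ℝ ∂μ := by
  refine ⟨1/6, by norm_num, fun f g hf hg => ?_⟩
  have hp0 : (4/3 : ℝ≥0∞) ≠ 0 := by norm_num
  have hpt : (4/3 : ℝ≥0∞) ≠ ∞ := by simp [ENNReal.div_eq_top]
  have hptr : (4/3 : ℝ≥0∞).toReal = 4/3 := by
    rw [ENNReal.toReal_div]; norm_num
  -- notation
  set D : Ω → ℝ := fun x => ⟪Phi (f x) - Phi (g x), f x - g x⟫_ℝ with hD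
  set I : ℝ≥0∞ := ∫⁻ x, ENNReal.ofReal (D x) ∂μ with hI
  set Nf := eLpNorm f (4/3) μ with hNfdef
  set Ng := eLpNorm g (4/3) μ with hNgdef
  set N := eLpNorm (f - g) (4/3) μ with hNdef
  -- measurability
  have hfm := hf.aestronglyMeasurable
  have hgm := hg.aestronglyMeasurable
  have hfa : AEMeasurable f μ := hfm.aemeasurable
  have hga : AEMeasurable g μ := hgm.aemeasurable
  have hPhif : AEStronglyMeasurable (fun x => Phi (f x)) μ := by
    have h1 : AEMeasurable (fun x => ‖f x‖ ^ (-(2:ℝ)/3)) μ := by fun_prop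
    exact h1.aestronglyMeasurable.smul hfm
  have hPhig : AEStronglyMeasurable (fun x => Phi (g x)) μ := by
    have h1 : AEMeasurable (fun x => ‖g x‖ ^ (-(2:ℝ)/3)) μ := by fun_prop
    exact h1.aestronglyMeasurable.smul hgm
  have hDm : AEStronglyMeasurable D μ := (hPhif.sub hPhig).inner (hfm.sub hgm)
  have hD0 : ∀ x, 0 ≤ D x := fun x => inner_Phi_nonneg _ _
  -- lintegral expressions for eLpNorms
  have hNA : N ^ ((4:ℝ)/3) = ∫⁻ x, (‖f x - g x‖₊ : ℝ≥0∞) ^ ((4:ℝ)/3) ∂μ := by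
    rw [hNdef, eLpNorm_eq_lintegral_rpow_enorm_toReal hp0 hpt, hptr, ← ENNReal.rpow_mul]
    norm_num [enorm_eq_nnnorm]
  have hNfA : Nf ^ ((4:ℝ)/3) = ∫⁻ x, (‖f x‖₊ : ℝ≥0∞) ^ ((4:ℝ)/3) ∂μ := by
    rw [hNfdef, eLpNorm_eq_lintegral_rpow_enorm_toReal hp0 hpt, hptr, ← ENNReal.rpow_mul]
    norm_num [enorm_eq_nnnorm]
  have hNgA : Ng ^ ((4:ℝ)/3) = ∫⁻ x, (‖g x‖₊ : ℝ≥0∞) ^ ((4:ℝ)/3) ∂μ := by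
    rw [hNgdef, eLpNorm_eq_lintegral_rpow_enorm_toReal hp0 hpt, hptr, ← ENNReal.rpow_mul]
    norm_num [enorm_eq_nnnorm]
  -- the sum of norms
  set S : Ω → ℝ := fun x => ‖f x‖ + ‖g x‖ with hSdef
  have hS0 : ∀ x, 0 ≤ S x := fun x => add_nonneg (norm_nonneg _) (norm_nonneg _)
  set W : ℝ≥0∞ := ∫⁻ x, (ENNReal.ofReal (S x)) ^ ((4:ℝ)/3) ∂μ with hW
  have hSo : ∀ x, ENNReal.ofReal (S x) = (‖f x‖₊ : ℝ≥0∞) + ‖g x‖₊ := by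
    intro x
    rw [hSdef, ENNReal.ofReal_add (norm_nonneg _) (norm_nonneg _),
      ofReal_norm, ofReal_norm, enorm_eq_nnnorm, enorm_eq_nnnorm]
  -- W is controlled
  have hWle : W ≤ 2 ^ ((4:ℝ)/3) * (Nf ^ ((4:ℝ)/3) + Ng ^ ((4:ℝ)/3)) := by
    rw [hW, hNfA, hNgA]
    calc ∫⁻ x, (ENNReal.ofReal (S x)) ^ ((4:ℝ)/3) ∂μ
        ≤ ∫⁻ x, 2 ^ ((4:ℝ)/3) *
            ((‖f x‖₊ : ℝ≥0∞) ^ ((4:ℝ)/3) + (‖g x‖₊ : ℝ≥0∞) ^ ((4:ℝ)/3)) ∂μ := by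
          refine lintegral_mono fun x => ?_
          rw [hSo x]
          exact ennreal_add_rpow43 _ _
    _ = 2 ^ ((4:ℝ)/3) * ∫⁻ x,
            ((‖f x‖₊ : ℝ≥0∞) ^ ((4:ℝ)/3) + (‖g x‖₊ : ℝ≥0∞) ^ ((4:ℝ)/3)) ∂μ :=
          lintegral_const_mul' _ _ (ENNReal.rpow_ne_top_of_nonneg (by norm_num) (by norm_num))
    _ = 2 ^ ((4:ℝ)/3) * (∫⁻ x, (‖f x‖₊ : ℝ≥0∞) ^ ((4:ℝ)/3) ∂μ +
            ∫⁻ x, (‖g x‖₊ : ℝ≥0∞) ^ ((4:ℝ)/3) ∂μ) := by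
          rw [lintegral_add_left' (by fun_prop)]
  -- finiteness
  have hNf_top : Nf ≠ ∞ := hf.eLpNorm_ne_top
  have hNg_top : Ng ≠ ∞ := hg.eLpNorm_ne_top
  have hN_top : N ≠ ∞ := (hf.sub hg).eLpNorm_ne_top
  have hNf43 : Nf ^ ((4:ℝ)/3) ≠ ∞ := ENNReal.rpow_ne_top_of_nonneg (by norm_num) hNf_top
  have hNg43 : Ng ^ ((4:ℝ)/3) ≠ ∞ := ENNReal.rpow_ne_top_of_nonneg (by norm_num) hNg_top
  have hW_top : W ≠ ∞ := by
    refine ne_top_of_le_ne_top ?_ hWle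
    exact ENNReal.mul_ne_top (ENNReal.rpow_ne_top_of_nonneg (by norm_num) (by norm_num))
      (by rw [Ne, ENNReal.add_eq_top]; push_neg; exact ⟨hNf43, hNg43⟩)
  have hI_le : I ≤ 2 * W := by
    rw [hI, hW]
    calc ∫⁻ x, ENNReal.ofReal (D x) ∂μ
        ≤ ∫⁻ x, 2 * (ENNReal.ofReal (S x)) ^ ((4:ℝ)/3) ∂μ := by
          refine lintegral_mono fun x => ?_
          calc ENNReal.ofReal (D x) ≤ ENNReal.ofReal (2 * (S x) ^ ((4:ℝ)/3)) :=
                ENNReal.ofReal_le_ofReal (inner_Phi_le _ _)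
          _ = 2 * (ENNReal.ofReal (S x)) ^ ((4:ℝ)/3) := by
                rw [ENNReal.ofReal_mul (by norm_num),
                  ← ENNReal.ofReal_rpow_of_nonneg (hS0 x) (by norm_num : (0:ℝ) ≤ 4/3)]
                norm_num
    _ = 2 * ∫⁻ x, (ENNReal.ofReal (S x)) ^ ((4:ℝ)/3) ∂μ :=
          lintegral_const_mul' _ _ (by norm_num)
  have hI_top : I ≠ ∞ :=
    ne_top_of_le_ne_top (ENNReal.mul_ne_top (by norm_num) hW_top) hI_le
  -- Hoelder
  have hDae : AEMeasurable (fun x => ENNReal.ofReal (D x)) μ := hDm.aemeasurable.ennreal_ofReal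
  have hHolder : ∫⁻ x, ((ENNReal.ofReal (D x)) ^ ((2:ℝ)/3) *
      (ENNReal.ofReal (S x)) ^ ((4:ℝ)/9)) ∂μ ≤ I ^ ((2:ℝ)/3) * W ^ ((1:ℝ)/3) := by
    have hconj : Real.HolderConjugate (3/2) 3 := ⟨by norm_num, by norm_num, by norm_num⟩
    have hu : AEMeasurable (fun x => (ENNReal.ofReal (D x)) ^ ((2:ℝ)/3)) μ := by fun_prop
    have hv : AEMeasurable (fun x => (ENNReal.ofReal (S x)) ^ ((4:ℝ)/9)) μ := by fun_prop
    have h := ENNReal.lintegral_mul_le_Lp_mul_Lq μ hconj hu hv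
    simp only [Pi.mul_apply] at h
    calc ∫⁻ x, ((ENNReal.ofReal (D x)) ^ ((2:ℝ)/3) * (ENNReal.ofReal (S x)) ^ ((4:ℝ)/9)) ∂μ
        ≤ (∫⁻ x, ((ENNReal.ofReal (D x)) ^ ((2:ℝ)/3)) ^ ((3:ℝ)/2) ∂μ) ^ (1/((3:ℝ)/2)) *
          (∫⁻ x, ((ENNReal.ofReal (S x)) ^ ((4:ℝ)/9)) ^ ((3:ℝ)) ∂μ) ^ (1/(3:ℝ)) := h
    _ = I ^ ((2:ℝ)/3) * W ^ ((1:ℝ)/3) := by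
          rw [hI, hW]
          simp_rw [← ENNReal.rpow_mul]
          norm_num
  -- main pointwise + Hoelder
  have hA_le : N ^ ((4:ℝ)/3) ≤ 3 ^ ((2:ℝ)/3) * (I ^ ((2:ℝ)/3) * W ^ ((1:ℝ)/3)) := by
    rw [hNA]
    calc ∫⁻ x, (‖f x - g x‖₊ : ℝ≥0∞) ^ ((4:ℝ)/3) ∂μ
        ≤ ∫⁻ x, 3 ^ ((2:ℝ)/3) * ((ENNReal.ofReal (D x)) ^ ((2:ℝ)/3) *
            (ENNReal.ofReal (S x)) ^ ((4:ℝ)/9)) ∂μ := by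
          refine lintegral_mono fun x => ?_
          have h1 : ((‖f x - g x‖₊ : ℝ≥0∞)) ^ ((4:ℝ)/3)
              = ENNReal.ofReal (‖f x - g x‖ ^ ((4:ℝ)/3)) := by
            rw [← enorm_eq_nnnorm, ← ofReal_norm,
              ENNReal.ofReal_rpow_of_nonneg (norm_nonneg _) (by norm_num : (0:ℝ) ≤ 4/3)]
          rw [h1]
          calc ENNReal.ofReal (‖f x - g x‖ ^ ((4:ℝ)/3))
              ≤ ENNReal.ofReal (3 ^ ((2:ℝ)/3) * (D x) ^ ((2:ℝ)/3) * (S x) ^ ((4:ℝ)/9)) :=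
                ENNReal.ofReal_le_ofReal (norm_sub_le_point _ _)
          _ = 3 ^ ((2:ℝ)/3) * ((ENNReal.ofReal (D x)) ^ ((2:ℝ)/3) *
                (ENNReal.ofReal (S x)) ^ ((4:ℝ)/9)) := by
                rw [ENNReal.ofReal_mul (mul_nonneg (by positivity) (Real.rpow_nonneg (hD0 x) _)),
                  ENNReal.ofReal_mul (by positivity),
                  ← ENNReal.ofReal_rpow_of_nonneg (by norm_num : (0:ℝ) ≤ 3) (by norm_num : (0:ℝ) ≤ 2/3),
                  ← ENNReal.ofReal_rpow_of_nonneg (hD0 x) (by norm_num : (0:ℝ) ≤ 2/3),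
                  ← ENNReal.ofReal_rpow_of_nonneg (hS0 x) (by norm_num : (0:ℝ) ≤ 4/9)]
                norm_num
                ring
    _ = 3 ^ ((2:ℝ)/3) * ∫⁻ x, ((ENNReal.ofReal (D x)) ^ ((2:ℝ)/3) *
            (ENNReal.ofReal (S x)) ^ ((4:ℝ)/9)) ∂μ :=
          lintegral_const_mul' _ _ (ENNReal.rpow_ne_top_of_nonneg (by norm_num) (by norm_num))
    _ ≤ 3 ^ ((2:ℝ)/3) * (I ^ ((2:ℝ)/3) * W ^ ((1:ℝ)/3)) := mul_le_mul_right hHolder _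
  -- assemble in ℝ≥0∞
  have hW2 : W ^ ((1:ℝ)/2) ≤ 2 * (Nf ^ ((2:ℝ)/3) + Ng ^ ((2:ℝ)/3)) := by
    calc W ^ ((1:ℝ)/2) ≤ (2 ^ ((4:ℝ)/3) * (Nf ^ ((4:ℝ)/3) + Ng ^ ((4:ℝ)/3))) ^ ((1:ℝ)/2) :=
          ENNReal.rpow_le_rpow hWle (by norm_num)
    _ = 2 ^ ((2:ℝ)/3) * ((Nf ^ ((4:ℝ)/3) + Ng ^ ((4:ℝ)/3)) ^ ((1:ℝ)/2)) := by
          rw [ENNReal.mul_rpow_of_nonneg _ _ (by norm_num), ← ENNReal.rpow_mul]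
          norm_num
    _ ≤ 2 ^ ((2:ℝ)/3) * ((Nf ^ ((4:ℝ)/3)) ^ ((1:ℝ)/2) + (Ng ^ ((4:ℝ)/3)) ^ ((1:ℝ)/2)) :=
          mul_le_mul_right (by
            have := ENNReal.rpow_add_le_add_rpow (Nf ^ ((4:ℝ)/3)) (Ng ^ ((4:ℝ)/3))
              (by norm_num : (0:ℝ) ≤ 1/2) (by norm_num)
            simpa using this) _
    _ = 2 ^ ((2:ℝ)/3) * (Nf ^ ((2:ℝ)/3) + Ng ^ ((2:ℝ)/3)) := by
          rw [← ENNReal.rpow_mul, ← ENNReal.rpow_mul]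
          norm_num
    _ ≤ 2 * (Nf ^ ((2:ℝ)/3) + Ng ^ ((2:ℝ)/3)) := by
          refine mul_le_mul_left ?_ _
          calc (2:ℝ≥0∞) ^ ((2:ℝ)/3) ≤ 2 ^ (1:ℝ) :=
                ENNReal.rpow_le_rpow_of_exponent_le one_le_two (by norm_num)
          _ = 2 := ENNReal.rpow_one 2
  have hmain : N ^ (2:ℝ) ≤ 6 * ((Nf ^ ((2:ℝ)/3) + Ng ^ ((2:ℝ)/3)) * I) := by
    have h1 : N ^ (2:ℝ) = (N ^ ((4:ℝ)/3)) ^ ((3:ℝ)/2) := by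
      rw [← ENNReal.rpow_mul]; norm_num
    have h2 : (N ^ ((4:ℝ)/3)) ^ ((3:ℝ)/2)
        ≤ (3 ^ ((2:ℝ)/3) * (I ^ ((2:ℝ)/3) * W ^ ((1:ℝ)/3))) ^ ((3:ℝ)/2) :=
      ENNReal.rpow_le_rpow hA_le (by norm_num)
    have h3 : (3 ^ ((2:ℝ)/3) * (I ^ ((2:ℝ)/3) * W ^ ((1:ℝ)/3))) ^ ((3:ℝ)/2)
        = 3 * (I * W ^ ((1:ℝ)/2)) := by
      rw [ENNReal.mul_rpow_of_nonneg _ _ (by norm_num),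
        ENNReal.mul_rpow_of_nonneg _ _ (by norm_num),
        ← ENNReal.rpow_mul, ← ENNReal.rpow_mul, ← ENNReal.rpow_mul]
      norm_num
    have h4 : 3 * (I * W ^ ((1:ℝ)/2)) ≤ 3 * (I * (2 * (Nf ^ ((2:ℝ)/3) + Ng ^ ((2:ℝ)/3)))) :=
      mul_le_mul_right (mul_le_mul_right hW2 I) 3
    have h5 : (3:ℝ≥0∞) * (I * (2 * (Nf ^ ((2:ℝ)/3) + Ng ^ ((2:ℝ)/3))))
        = 6 * ((Nf ^ ((2:ℝ)/3) + Ng ^ ((2:ℝ)/3)) * I) := by ring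
    rw [h1]
    calc (N ^ ((4:ℝ)/3)) ^ ((3:ℝ)/2) ≤ _ := h2
    _ = 3 * (I * W ^ ((1:ℝ)/2)) := h3
    _ ≤ 3 * (I * (2 * (Nf ^ ((2:ℝ)/3) + Ng ^ ((2:ℝ)/3)))) := h4
    _ = 6 * ((Nf ^ ((2:ℝ)/3) + Ng ^ ((2:ℝ)/3)) * I) := h5
  -- pass to real numbers
  have hIr : ∫ x, D x ∂μ = I.toReal :=
    integral_eq_lintegral_of_nonneg_ae (Filter.Eventually.of_forall hD0) hDm
  have hNf23 : Nf ^ ((2:ℝ)/3) ≠ ∞ := ENNReal.rpow_ne_top_of_nonneg (by norm_num) hNf_top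
  have hNg23 : Ng ^ ((2:ℝ)/3) ≠ ∞ := ENNReal.rpow_ne_top_of_nonneg (by norm_num) hNg_top
  have hRHS_top : (6:ℝ≥0∞) * ((Nf ^ ((2:ℝ)/3) + Ng ^ ((2:ℝ)/3)) * I) ≠ ∞ := by
    refine ENNReal.mul_ne_top (by norm_num) (ENNReal.mul_ne_top ?_ hI_top)
    rw [Ne, ENNReal.add_eq_top]; push_neg; exact ⟨hNf23, hNg23⟩
  have ht := ENNReal.toReal_mono hRHS_top hmain
  rw [ENNReal.toReal_mul, ENNReal.toReal_mul, ENNReal.toReal_add hNf23 hNg23,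
    ← ENNReal.toReal_rpow, ← ENNReal.toReal_rpow, ← ENNReal.toReal_rpow] at ht
  have h6 : ((6:ℝ≥0∞)).toReal = 6 := by norm_num
  rw [h6] at ht
  have hsq : N.toReal ^ (2:ℝ) = N.toReal ^ 2 := by
    rw [show (2:ℝ) = ((2:ℕ):ℝ) by norm_num, Real.rpow_natCast]
  rw [hsq] at ht
  rw [hIr]
  linarith
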